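/- The DFS walk w on a plane rooted tree admits the iterative characterization: w_0 = r (the root), w_1 is the first child of r, and for all k ≥ 2, w_k = next(w_{k−2}, w_{k−1}), where next(i, j) is the successor of i in the local order at j among neighbors of j (with the convention 'parent last') if i is a child of j, and the first neighbor of j if i is the parent of j. -/

import Mathlib

/-- A plane rooted tree: a root label together with an ordered list of subtrees. -/
inductive PTree (V : Type) : Type
  | node : V → List (PTree V) → PTree V

namespace PTree

variable {V : Type}

/-- The root label of a plane rooted tree. -/
def root : PTree V → V
  | node v _ => v

/-- The depth-first-search walk: `dfs (node v [t₁,…,tₘ]) = v dfs(t₁) v … v dfs(tₘ) v`. -/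
def dfs : PTree V → List V
  | node v ts => v :: (ts.attach.map (fun t => dfs t.1 ++ [v])).flatten
decreasing_by simp only [PTree.node.sizeOf_spec]; have := List.sizeOf_lt_of_mem t.2; omega

/-- The list of vertex labels of a plane rooted tree. -/
def verts : PTree V → List V
  | node v ts => v :: (ts.attach.map (fun t => verts t.1)).flatten
decreasing_by simp only [PTree.node.sizeOf_spec]; have := List.sizeOf_lt_of_mem t.2; omega

/-- For each vertex, its ordered list of neighbours: the children in the plane order,
followed (last) by the parent, given as `p` for the current root. -/
def nbrsMap : Option V → PTree V → List (V × List V)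
  | p, node v ts =>
      (v, ts.map root ++ p.toList) ::
        (ts.attach.map (fun t => nbrsMap (some v) t.1)).flatten
decreasing_by simp only [PTree.node.sizeOf_spec]; have := List.sizeOf_lt_of_mem t.2; omega

lemma dfs_def (v : V) (ts : List (PTree V)) :
    dfs (node v ts) = v :: (ts.map (fun t => dfs t ++ [v])).flatten := by
  rw [dfs]; congr 1; simp

lemma verts_def (v : V) (ts : List (PTree V)) :
    verts (node v ts) = v :: (ts.map verts).flatten := by
  rw [verts]; congr 1; simp

lemma nbrsMap_def (p : Option V) (v : V) (ts : List (PTree V)) :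
    nbrsMap p (node v ts) =
      (v, ts.map root ++ p.toList) :: (ts.map (nbrsMap (some v))).flatten := by
  rw [nbrsMap]; congr 1; simp

lemma cons_flatten (v : V) (l : List (List V)) :
    v :: (l.map (· ++ [v])).flatten = (l.map (v :: ·)).flatten ++ [v] := by
  induction l with
  | nil => rfl
  | cons a l ih =>
    simp only [List.map_cons, List.flatten_cons, List.cons_append, List.append_assoc]
    rw [← ih]
    simp

lemma dfs_alt (v : V) (ts : List (PTree V)) :
    dfs (node v ts) = (ts.map (fun t => v :: dfs t)).flatten ++ [v] := by
  rw [dfs_def]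
  have h1 : (ts.map fun t => dfs t ++ [v]) = (ts.map dfs).map (· ++ [v]) := by
    simp [List.map_map]
  have h2 : (ts.map fun t => v :: dfs t) = (ts.map dfs).map (v :: ·) := by
    simp [List.map_map]
  rw [h1, h2, cons_flatten]

lemma dfs_ne_nil (t : PTree V) : dfs t ≠ [] := by
  cases t with | node v ts => rw [dfs_def]; simp

lemma dfs_getElem_zero (t : PTree V) : (dfs t)[0]? = some (root t) := by
  cases t with | node v ts => rw [dfs_def]; simp [root]

lemma dfs_getLast (t : PTree V) : (dfs t).getLast? = some (root t) := by
  cases t with | node v ts => rw [dfs_alt]; simp [root]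

lemma dfs_cons (t : PTree V) : ∃ l, dfs t = root t :: l := by
  cases t with | node v ts => exact ⟨(ts.map (fun t => dfs t ++ [v])).flatten, by rw [dfs_def]; rfl⟩

lemma root_mem_verts (t : PTree V) : root t ∈ verts t := by
  cases t with | node v ts => rw [verts_def]; simp [root]


def Agrees (nb : V → List V) (p : Option V) (t : PTree V) : Prop :=
  ∀ x l, (x, l) ∈ nbrsMap p t → nb x = l

lemma Agrees.root_eq {nb : V → List V} {p : Option V} {v : V} {ts : List (PTree V)}
    (h : Agrees nb p (node v ts)) : nb v = ts.map root ++ p.toList :=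
  h v _ (by rw [nbrsMap_def]; exact List.mem_cons_self)

lemma Agrees.child {nb : V → List V} {p : Option V} {v : V} {ts : List (PTree V)}
    {t : PTree V} (h : Agrees nb p (node v ts)) (ht : t ∈ ts) : Agrees nb (some v) t := by
  intro x l hm
  refine h x l ?_
  rw [nbrsMap_def]
  exact List.mem_cons_of_mem _ (List.mem_flatten.2 ⟨_, List.mem_map_of_mem ht, hm⟩)

lemma roots_nodup : ∀ (ts : List (PTree V)),
    ((ts.map verts).flatten).Nodup → (ts.map root).Nodup := by
  intro ts
  induction ts with
  | nil => simp
  | cons t ts ih =>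
    simp only [List.map_cons, List.flatten_cons, List.nodup_append, List.nodup_cons]
    rintro ⟨h1, h2, h3⟩
    refine ⟨fun hc => ?_, ih h2⟩
    rw [List.mem_map] at hc
    obtain ⟨t', ht', he⟩ := hc
    exact h3 _ (root_mem_verts t) _ (List.mem_flatten.2 ⟨verts t', List.mem_map_of_mem ht',
      he ▸ root_mem_verts t'⟩) rfl

lemma nbrsMap_keys : ∀ (t : PTree V) (p : Option V),
    (nbrsMap p t).map Prod.fst = verts t
  | node v ts, p => by
    rw [nbrsMap_def, verts_def]
    simp only [List.map_cons, List.map_flatten, List.map_map]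
    congr 2
    refine List.map_congr_left fun t ht => ?_
    exact nbrsMap_keys t (some v)
decreasing_by simp only [PTree.node.sizeOf_spec]; have := List.sizeOf_lt_of_mem ht; omega

lemma lookup_eq_of_mem [DecidableEq V] : ∀ {l : List (V × List V)},
    (l.map Prod.fst).Nodup → ∀ {x : V} {a : List V}, (x, a) ∈ l → l.lookup x = some a := by
  intro l
  induction l with
  | nil => intro _ x a h; simp at h
  | cons p l ih =>
    obtain ⟨y, b⟩ := p
    intro hnd x a h
    simp only [List.map_cons, List.nodup_cons] at hnd
    rcases List.mem_cons.1 h with h | h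
    · cases h
      simp [List.lookup_cons]
    · have hmem : x ∈ l.map Prod.fst := List.mem_map.2 ⟨(x, a), h, rfl⟩
      have hxy : x ≠ y := by
        rintro rfl
        exact hnd.1 hmem
      have hb : (x == y) = false := beq_eq_false_iff_ne.mpr hxy
      rw [List.lookup_cons, hb]
      exact ih hnd.2 h

variable [DecidableEq V]

def cyc (nb : V → List V) (i j : V) : Option V :=
  (nb j)[(List.idxOf i (nb j) + 1) % (nb j).length]?

def Good (nb : V → List V) (l : List V) : Prop :=
  ∀ (k : ℕ) (x y z : V), l[k]? = some x → l[k+1]? = some y → l[k+2]? = some z →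
    cyc nb x y = some z

lemma good_short {nb : V → List V} {l : List V} (h : l.length ≤ 2) : Good nb l := by
  intro k x y z hx hy hz
  rw [List.getElem?_eq_none (by omega)] at hz
  exact absurd hz (by simp)

lemma good_append {nb : V → List V} {a b : List V}
    (h1 : Good nb (a ++ b.take 2)) (h2 : Good nb b) : Good nb (a ++ b) := by
  intro k x y z hx hy hz
  by_cases hk : k + 2 ≤ a.length + 1
  · have key : ∀ i ≤ a.length + 1, (a ++ b)[i]? = (a ++ b.take 2)[i]? := by
      intro i hi
      by_cases hia : i < a.length
      · rw [List.getElem?_append_left hia, List.getElem?_append_left hia]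
      · rw [List.getElem?_append_right (by omega), List.getElem?_append_right (by omega),
          List.getElem?_take, if_pos (by omega)]
    exact h1 k x y z (by rw [← key k (by omega)]; exact hx)
      (by rw [← key (k+1) (by omega)]; exact hy) (by rw [← key (k+2) (by omega)]; exact hz)
  · have hka : a.length ≤ k := by omega
    rw [List.getElem?_append_right hka] at hx
    rw [List.getElem?_append_right (by omega)] at hy
    rw [List.getElem?_append_right (by omega)] at hz
    have e1 : k + 1 - a.length = (k - a.length) + 1 := by omega
    have e2 : k + 2 - a.length = (k - a.length) + 2 := by omega
    rw [e1] at hy; rw [e2] at hz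
    exact h2 _ x y z hx hy hz

lemma good_cons {nb : V → List V} {x : V} {l : List V}
    (h1 : ∀ y z, l[0]? = some y → l[1]? = some z → cyc nb x y = some z)
    (h2 : Good nb l) : Good nb (x :: l) := by
  intro k a y z ha hy hz
  cases k with
  | zero =>
    simp only [List.getElem?_cons_zero, Option.some.injEq] at ha
    subst ha
    exact h1 y z (by simpa using hy) (by simpa using hz)
  | succ k =>
    exact h2 k a y z (by simpa using ha) (by simpa using hy) (by simpa using hz)

lemma good_snoc {nb : V → List V} {l : List V} {w : V}
    (h : Good nb l)
    (h2 : ∀ x y, l[l.length - 2]? = some x → l[l.length - 1]? = some y →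
      cyc nb x y = some w) : Good nb (l ++ [w]) := by
  intro k x y z hx hy hz
  have hlen : k + 2 < l.length + 1 := by
    by_contra hc
    rw [List.getElem?_eq_none (by simp; omega)] at hz
    exact absurd hz (by simp)
  by_cases hk : k + 2 = l.length
  · rw [List.getElem?_append_right (by omega)] at hz
    have : z = w := by
      rw [show k + 2 - l.length = 0 by omega] at hz
      simpa using hz.symm
    subst this
    rw [List.getElem?_append_left (by omega)] at hx hy
    exact h2 x y (by rw [show l.length - 2 = k by omega]; exact hx)
      (by rw [show l.length - 1 = k + 1 by omega]; exact hy)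
  · rw [List.getElem?_append_left (by omega)] at hx hy hz
    exact h k x y z hx hy hz

lemma cyc_chain {nb : V → List V} {v : V} {L : List V} (hL : nb v = L) (hnd : L.Nodup) :
    List.Chain' (fun a b => cyc nb a v = some b) L := by
  show List.IsChain _ _; rw [List.isChain_iff_getElem]
  intro i hi
  unfold cyc
  rw [hL, List.Nodup.idxOf_getElem hnd, Nat.mod_eq_of_lt (by omega),
    List.getElem?_eq_getElem (by omega)]

lemma cyc_last {nb : V → List V} {v q : V} {L : List V} (hL : nb v = L) (hnd : L.Nodup)
    (hq : L.getLast? = some q) : cyc nb q v = L[0]? := by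
  rw [List.getLast?_eq_getElem?] at hq
  have hlen : 0 < L.length := by
    rcases L with _ | ⟨a, L⟩
    · simp at hq
    · simp
  have h1 : L.length - 1 < L.length := by omega
  rw [List.getElem?_eq_getElem h1, Option.some.injEq] at hq
  unfold cyc
  rw [hL, ← hq, List.Nodup.idxOf_getElem hnd, Nat.sub_add_cancel (by omega), Nat.mod_self]

lemma good_flatten (nb : V → List V) (v : V) :
    ∀ (us : List (PTree V)) (s : List V), s.length ≤ 1 →
    (∀ t ∈ us, Good nb (v :: (dfs t ++ [v]))) →
    List.Chain' (fun a b => cyc nb a v = some b) (us.map root ++ s) →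
    Good nb ((us.map (fun t => v :: dfs t)).flatten ++ v :: s) := by
  intro us
  induction us with
  | nil =>
    intro s hs _ _
    simp only [List.map_nil, List.flatten_nil, List.nil_append]
    exact good_short (by simp; omega)
  | cons t us ih =>
    intro s hs hG hchain
    rw [List.map_cons, List.flatten_cons, List.append_assoc]
    have hchain' : List.Chain' (fun a b => cyc nb a v = some b) (us.map root ++ s) := by
      have := hchain.tail
      simpa [List.Chain'] using this
    have hGrest : Good nb ((us.map (fun t => v :: dfs t)).flatten ++ v :: s) :=
      ih s hs (fun t' ht' => hG t' (List.mem_cons_of_mem _ ht')) hchain'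
    refine good_append (a := v :: dfs t)
      (b := (us.map (fun t => v :: dfs t)).flatten ++ v :: s) ?_ hGrest
    have htake : ((us.map (fun t => v :: dfs t)).flatten ++ v :: s).take 2
        = v :: (us.map root ++ s).take 1 := by
      cases us with
      | nil => simp
      | cons t' us' =>
        obtain ⟨tl, htl⟩ := dfs_cons t'
        simp [htl]
    rw [htake]
    rcases h1 : (us.map root ++ s).take 1 with _ | ⟨b, rest1⟩
    · exact hG t (List.mem_cons_self)
    · have hrest1 : rest1 = [] := by
        have := congrArg List.length h1
        simp only [List.length_take, List.length_cons] at this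
        have h2 : rest1.length = 0 := by omega
        exact List.length_eq_zero_iff.mp h2
      subst hrest1
      obtain ⟨l2, hb⟩ : ∃ l2, us.map root ++ s = b :: l2 := by
        cases h2 : us.map root ++ s with
        | nil => rw [h2] at h1; simp at h1
        | cons c l2 =>
          rw [h2] at h1
          simp only [List.take_succ_cons, List.take_zero, List.cons.injEq] at h1
          exact ⟨l2, by rw [h1.1]⟩
      have hchain2 : cyc nb (root t) v = some b := by
        rw [List.map_cons, List.cons_append, hb] at hchain
        exact (List.isChain_cons_cons.1 hchain).1
      have hGt := hG t (List.mem_cons_self)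
      rw [show (v :: dfs t) ++ [v, b] = (v :: (dfs t ++ [v])) ++ [b] by simp]
      apply good_snoc hGt
      intro x y hx hy
      obtain ⟨l0, hl0⟩ := List.getLast?_eq_some_iff.mp (dfs_getLast t)
      have hl : v :: (dfs t ++ [v]) = (v :: l0) ++ [root t, v] := by simp [hl0]
      rw [hl] at hx hy
      have e : ((v :: l0) ++ [root t, v]).length = l0.length + 3 := by simp
      rw [e, show l0.length + 3 - 2 = l0.length + 1 by omega] at hx
      rw [e, show l0.length + 3 - 1 = l0.length + 2 by omega] at hy
      rw [List.getElem?_append_right (by simp)] at hx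
      rw [List.getElem?_append_right (by simp)] at hy
      simp only [List.length_cons] at hx hy
      rw [show l0.length + 1 - (l0.length + 1) = 0 by omega] at hx
      rw [show l0.length + 2 - (l0.length + 1) = 1 by omega] at hy
      simp only [List.getElem?_cons_zero, List.getElem?_cons_succ,
        Option.some.injEq] at hx hy
      rw [← hx, ← hy]
      exact hchain2

omit [DecidableEq V] in
lemma verts_nodup_child {v : V} {ts : List (PTree V)} (hnd : (verts (node v ts)).Nodup)
    {t : PTree V} (ht : t ∈ ts) : (verts t).Nodup ∧ v ∉ verts t := by
  rw [verts_def, List.nodup_cons] at hnd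
  have hsub : (verts t).Sublist ((ts.map verts).flatten) :=
    List.sublist_flatten_of_mem (List.mem_map_of_mem ht)
  refine ⟨hnd.2.sublist hsub, fun hc => ?_⟩
  exact hnd.1 (List.mem_flatten.2 ⟨verts t, List.mem_map_of_mem ht, hc⟩)

lemma good_walk (nb : V → List V) : ∀ (t : PTree V) (p : Option V),
    Agrees nb p t → (verts t).Nodup → (∀ q ∈ p.toList, q ∉ verts t) →
    Good nb (p.toList ++ dfs t ++ p.toList)
  | node v ts, p, hag, hnd, hp => by
    have hL : nb v = ts.map root ++ p.toList := hag.root_eq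
    have hvd := hnd
    rw [verts_def, List.nodup_cons] at hvd
    obtain ⟨hv_not, hflat⟩ := hvd
    have hndL : (ts.map root ++ p.toList).Nodup := by
      rw [List.nodup_append]
      refine ⟨roots_nodup ts hflat, by cases p <;> simp, ?_⟩
      intro a ha b hb hab
      subst hab
      obtain ⟨t', ht', rfl⟩ := List.mem_map.1 ha
      refine hp _ hb ?_
      rw [verts_def]
      exact List.mem_cons_of_mem _ (List.mem_flatten.2
        ⟨verts t', List.mem_map_of_mem ht', root_mem_verts t'⟩)
    have hchain := cyc_chain hL hndL
    have hIH : ∀ t' ∈ ts, Good nb (v :: (dfs t' ++ [v])) := fun t' ht' => by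
      have hc := verts_nodup_child hnd ht'
      have := good_walk nb t' (some v) (hag.child ht') hc.1
        (by intro q hq; simp only [Option.toList_some, List.mem_singleton] at hq
            subst hq; exact hc.2)
      simpa using this
    cases ts with
    | nil =>
      cases p with
      | none => exact good_short (by rw [dfs_def]; simp)
      | some q =>
        show Good nb (q :: (dfs (node v []) ++ [q]))
        rw [dfs_def]
        simp only [List.map_nil, List.flatten_nil]
        refine good_cons ?_ (good_short (by simp))
        intro y z hy hz
        simp only [List.cons_append, List.nil_append, List.getElem?_cons_zero,
          List.getElem?_cons_succ, Option.some.injEq] at hy hz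
        subst hy; subst hz
        have hlast : (List.map root ([] : List (PTree V)) ++ (some q).toList).getLast?
            = some q := by simp
        have := cyc_last hL hndL hlast
        simpa using this
    | cons t1 ts' =>
      have hbody : Good nb ((((t1 :: ts').map (fun t => v :: dfs t)).flatten)
          ++ v :: p.toList) :=
        good_flatten nb v (t1 :: ts') p.toList (by cases p <;> simp) hIH hchain
      cases p with
      | none =>
        show Good nb ([] ++ dfs (node v (t1 :: ts')) ++ [])
        rw [List.nil_append, List.append_nil, dfs_alt]
        exact hbody
      | some q =>
        show Good nb (q :: (dfs (node v (t1 :: ts')) ++ [q]))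
        have hb2 : dfs (node v (t1 :: ts')) ++ [q]
            = (((t1 :: ts').map (fun t => v :: dfs t)).flatten) ++ v :: [q] := by
          rw [dfs_alt, List.append_assoc]; rfl
        rw [hb2]
        refine good_cons ?_ hbody
        intro y z hy hz
        obtain ⟨tl, htl⟩ := dfs_cons t1
        simp only [List.map_cons, List.flatten_cons, htl] at hy hz
        simp only [List.cons_append, List.getElem?_cons_zero, List.getElem?_cons_succ,
          Option.some.injEq] at hy hz
        subst hy; subst hz
        have hlast : (List.map root (t1 :: ts') ++ (some q).toList).getLast? = some q :=
          List.getLast?_concat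
        have := cyc_last hL hndL hlast
        simpa using this
decreasing_by simp only [PTree.node.sizeOf_spec]; have := List.sizeOf_lt_of_mem ht'; omega

/-- The ordered neighbour list of a vertex `y` (children first, parent last). -/
def nbrsOf (t : PTree V) (y : V) : List V :=
  (((nbrsMap none t).lookup y).getD [])

/-- `next i j` : the cyclic successor of `i` in the neighbour list of `j` (children in
the plane order, then the parent last); so it is the successor of `i` in the local
order at `j` when `i` is a child of `j`, and the first neighbour of `j` when `i` is
the parent of `j`. -/
def nextNbr (t : PTree V) (i j : V) : Option V :=
  (nbrsOf t j)[(List.idxOf i (nbrsOf t j) + 1) % (nbrsOf t j).length]?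

/-- The iterative characterization of the DFS walk: `w₀` is the root, `w₁` the first
child of the root, and each subsequent vertex is `next(w_{k-2}, w_{k-1})`. -/
theorem dfs_iterative (r : V) (ts : List (PTree V)) (hts : ts ≠ [])
    (hnd : (verts (node r ts)).Nodup) :
    (dfs (node r ts))[0]? = some r ∧
    (dfs (node r ts))[1]? = (nbrsOf (node r ts) r)[0]? ∧
    ∀ (k : ℕ) (x y z : V),
      (dfs (node r ts))[k]? = some x →
      (dfs (node r ts))[k + 1]? = some y →
      (dfs (node r ts))[k + 2]? = some z →
      nextNbr (node r ts) x y = some z := by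
  have hkeys : ((nbrsMap none (node r ts)).map Prod.fst).Nodup := by
    rw [nbrsMap_keys]; exact hnd
  have hag : Agrees (nbrsOf (node r ts)) none (node r ts) := by
    intro x l hm
    unfold nbrsOf
    rw [lookup_eq_of_mem hkeys hm]
    rfl
  have hgood : Good (nbrsOf (node r ts)) (dfs (node r ts)) := by
    have := good_walk (nbrsOf (node r ts)) (node r ts) none hag hnd (by simp)
    simpa using this
  refine ⟨?_, ?_, ?_⟩
  · exact dfs_getElem_zero _
  · have hr : nbrsOf (node r ts) r = ts.map root := by
      have := hag.root_eq
      simpa using this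
    rcases ts with _ | ⟨t1, ts'⟩
    · exact absurd rfl hts
    · obtain ⟨tl, htl⟩ := dfs_cons t1
      rw [dfs_def, hr]
      simp [htl]
  · intro k x y z hx hy hz
    exact hgood k x y z hx hy hz

end PTree
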